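/- Let X and Y be sets and let g be a function from X to the Y-processes over A. Define g†(P) = (T, F) for each X-process P by T = {v ∈ T_P | v a list over A} ∪ {vw | vx ∈ T_P for some x ∈ X, w ∈ T_{g(x)}} and F = F_P ∪ {(vw, W) | vx ∈ T_P for some x ∈ X, (w,W) ∈ F_{g(x)}}. Then: (i) g†(P) is a Y-process, and it is finitary whenever P is finitary and g(x) is finitary for every x with an X-trace in T_P; (ii) g†(η(x)) = g(x) for all x ∈ X; (iii) g† is a homomorphism: g†(P ⊓ Q) = g†(P) ⊓ g†(Q), g†(□_{a⃗}(P₁,…,Pₙ)) = □_{a⃗}(g†(P₁),…,g†(Pₙ)) and g†(□^Ω_{a⃗}(P₁,…,Pₙ)) = □^Ω_{a⃗}(g†(P₁),…,g†(Pₙ)); and (iv) g† is the unique such map on finitary X-processes: if h maps finitary X-processes to Y-processes, h(η(x)) = g(x) for all x ∈ X, and h preserves ⊓, □_{a⃗} and □^Ω_{a⃗}, then h(P) = g†(P) for every finitary X-process P. -/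

import Mathlib

namespace CSP

variable {A X : Type*}

/-- An `X`-process candidate over `A`: its trace set contains plain traces
`(w, none)` and `X`-traces `(w, some x)`, and its failure pairs `(w, W)` have
`W ⊆ A` possibly infinite. -/
abbrev XProc (A X : Type*) := Set (List A × Option X) × Set (List A × Set A)

/-- Conditions (1)–(5), together with `X`-trace prefix closure, making a pair
`(T, F)` an `X`-process. -/
structure IsXProc (P : XProc A X) : Prop where
  nil_mem : ([], (none : Option X)) ∈ P.1
  prefix_closed : ∀ (w : List A) (a : A),
    (w ++ [a], (none : Option X)) ∈ P.1 → (w, (none : Option X)) ∈ P.1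
  xtrace_closed : ∀ (w : List A) (x : X),
    (w, some x) ∈ P.1 → (w, (none : Option X)) ∈ P.1
  fail_trace : ∀ (w : List A) (W : Set A),
    (w, W) ∈ P.2 → (w, (none : Option X)) ∈ P.1
  subset_closed : ∀ (w : List A) (W V : Set A),
    (w, W) ∈ P.2 → V ⊆ W → (w, V) ∈ P.2
  ext_closed : ∀ (w : List A) (W V : Set A), (w, W) ∈ P.2 →
    (∀ a ∈ V, (w ++ [a], (none : Option X)) ∉ P.1) → (w, W ∪ V) ∈ P.2

/-- An `X`-process is finitary when its trace set is finite. -/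
def XFinitary (P : XProc A X) : Prop := P.1.Finite

/-- The unit `η(x) = ({ε, εx}, ∅)`. -/
def xeta (A : Type*) {X : Type*} (x : X) : XProc A X :=
  ({([], none), ([], some x)}, ∅)

/-- Divergence `Ω = ({ε}, ∅)`. -/
def xomega (A X : Type*) : XProc A X := ({([], none)}, ∅)

/-- Internal choice `P ⊓ Q`. -/
def xintc (P Q : XProc A X) : XProc A X := (P.1 ∪ Q.1, P.2 ∪ Q.2)

/-- Deterministic external choice `□_{a⃗}(P₁,…,Pₙ)`, given as a list of
action/process pairs (the actions are required to be pairwise distinct via a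
`Nodup` hypothesis wherever this operation is used). -/
def xdet (cs : List (A × XProc A X)) : XProc A X :=
  ({([], none)} ∪ {t | ∃ c ∈ cs, ∃ s ∈ c.2.1, t = (c.1 :: s.1, s.2)},
   {p | p.1 = [] ∧ ∀ c ∈ cs, c.1 ∉ p.2} ∪
   {p | ∃ c ∈ cs, ∃ w, p.1 = c.1 :: w ∧ (w, p.2) ∈ c.2.2})

/-- Deterministic external choice with an `Ω`-summand `□^Ω_{a⃗}(P₁,…,Pₙ)`. -/
def xdetO (cs : List (A × XProc A X)) : XProc A X :=
  ({([], none)} ∪ {t | ∃ c ∈ cs, ∃ s ∈ c.2.1, t = (c.1 :: s.1, s.2)},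
   {p | ∃ c ∈ cs, ∃ w, p.1 = c.1 :: w ∧ (w, p.2) ∈ c.2.2})

/-- The Kleisli extension `g†` of a map `g` from `X` to `Y`-processes. -/
def dagger {A X Y : Type*} (g : X → XProc A Y) (P : XProc A X) : XProc A Y :=
  ({t | t.2 = none ∧ (t.1, (none : Option X)) ∈ P.1} ∪
     {t | ∃ (v : List A) (x : X), (v, some x) ∈ P.1 ∧
            ∃ s ∈ (g x).1, t = (v ++ s.1, s.2)},
   P.2 ∪
     {p | ∃ (v : List A) (x : X) (w : List A), (v, some x) ∈ P.1 ∧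
            (w, p.2) ∈ (g x).2 ∧ p.1 = v ++ w})

section Aux

variable {Y : Type*}


theorem dagger_eta' (g : X → XProc A Y) (hg : ∀ x, IsXProc (g x)) (x : X) :
    dagger g (xeta A x) = g x := by
  have h1 : (dagger g (xeta A x)).1 = (g x).1 := by
    ext ⟨w, o⟩
    simp only [dagger, xeta, Set.mem_union, Set.mem_setOf_eq, Set.mem_insert_iff,
      Set.mem_singleton_iff, Prod.mk.injEq]
    constructor
    · rintro (⟨ho, h⟩ | ⟨v, x', h, s, hs, h1, h2⟩)
      · rcases h with ⟨rfl, h⟩ | ⟨rfl, h⟩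
        · subst ho; exact (hg x).nil_mem
        · exact absurd h (by simp)
      · rcases h with ⟨rfl, h⟩ | ⟨rfl, h⟩
        · exact absurd h (by simp)
        · rw [Option.some_inj] at h; subst h; subst h1; subst h2
          simpa using hs
    · intro hw
      right
      exact ⟨[], x, Or.inr ⟨rfl, rfl⟩, (w, o), hw, by simp⟩
  have h2 : (dagger g (xeta A x)).2 = (g x).2 := by
    ext ⟨w, W⟩
    simp only [dagger, xeta, Set.mem_union, Set.mem_setOf_eq, Set.mem_insert_iff,
      Set.mem_singleton_iff, Prod.mk.injEq]
    constructor
    · rintro (h | ⟨v, x', w', h, h1, h2⟩)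
      · exact absurd h (Set.notMem_empty _)
      · rcases h with ⟨rfl, h⟩ | ⟨rfl, h⟩
        · exact absurd h (by simp)
        · rw [Option.some_inj] at h; subst h; subst h2; simpa using h1
    · intro hw
      exact Or.inr ⟨[], x, w, Or.inr ⟨rfl, rfl⟩, hw, by simp⟩
  exact Prod.ext h1 h2

theorem dagger_intc' (g : X → XProc A Y) (P Q : XProc A X) :
    dagger g (xintc P Q) = xintc (dagger g P) (dagger g Q) := by
  have h1 : (dagger g (xintc P Q)).1 = (xintc (dagger g P) (dagger g Q)).1 := by
    ext t
    simp only [dagger, xintc, Set.mem_union, Set.mem_setOf_eq]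
    constructor
    · rintro (⟨ho, (h | h)⟩ | ⟨v, x, (h | h), hs⟩)
      · exact Or.inl (Or.inl ⟨ho, h⟩)
      · exact Or.inr (Or.inl ⟨ho, h⟩)
      · exact Or.inl (Or.inr ⟨v, x, h, hs⟩)
      · exact Or.inr (Or.inr ⟨v, x, h, hs⟩)
    · rintro ((⟨ho, h⟩ | ⟨v, x, h, hs⟩) | (⟨ho, h⟩ | ⟨v, x, h, hs⟩))
      · exact Or.inl ⟨ho, Or.inl h⟩
      · exact Or.inr ⟨v, x, Or.inl h, hs⟩
      · exact Or.inl ⟨ho, Or.inr h⟩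
      · exact Or.inr ⟨v, x, Or.inr h, hs⟩
  have h2 : (dagger g (xintc P Q)).2 = (xintc (dagger g P) (dagger g Q)).2 := by
    ext p
    simp only [dagger, xintc, Set.mem_union, Set.mem_setOf_eq]
    constructor
    · rintro ((h | h) | ⟨v, x, w, (h | h), hs⟩)
      · exact Or.inl (Or.inl h)
      · exact Or.inr (Or.inl h)
      · exact Or.inl (Or.inr ⟨v, x, w, h, hs⟩)
      · exact Or.inr (Or.inr ⟨v, x, w, h, hs⟩)
    · rintro ((h | ⟨v, x, w, h, hs⟩) | (h | ⟨v, x, w, h, hs⟩))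
      · exact Or.inl (Or.inl h)
      · exact Or.inr ⟨v, x, w, Or.inl h, hs⟩
      · exact Or.inl (Or.inr h)
      · exact Or.inr ⟨v, x, w, Or.inr h, hs⟩
  exact Prod.ext h1 h2

theorem mem_dagger1 {g : X → XProc A Y} {P : XProc A X} {t : List A × Option Y} :
    t ∈ (dagger g P).1 ↔ (t.2 = none ∧ (t.1, (none : Option X)) ∈ P.1) ∨
      ∃ (v : List A) (x : X), (v, some x) ∈ P.1 ∧ ∃ s ∈ (g x).1, t = (v ++ s.1, s.2) :=
  Iff.rfl

theorem mem_dagger2 {g : X → XProc A Y} {P : XProc A X} {p : List A × Set A} :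
    p ∈ (dagger g P).2 ↔ p ∈ P.2 ∨
      ∃ (v : List A) (x : X) (w : List A), (v, some x) ∈ P.1 ∧
        (w, p.2) ∈ (g x).2 ∧ p.1 = v ++ w :=
  Iff.rfl

theorem mem_xdet1 {cs : List (A × XProc A X)} {t : List A × Option X} :
    t ∈ (xdet cs).1 ↔ t = ([], none) ∨ ∃ c ∈ cs, ∃ s ∈ c.2.1, t = (c.1 :: s.1, s.2) :=
  Iff.rfl

theorem mem_xdet2 {cs : List (A × XProc A X)} {p : List A × Set A} :
    p ∈ (xdet cs).2 ↔ (p.1 = [] ∧ ∀ c ∈ cs, c.1 ∉ p.2) ∨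
      ∃ c ∈ cs, ∃ w, p.1 = c.1 :: w ∧ (w, p.2) ∈ c.2.2 :=
  Iff.rfl

theorem mem_xdetO1 {cs : List (A × XProc A X)} {t : List A × Option X} :
    t ∈ (xdetO cs).1 ↔ t = ([], none) ∨ ∃ c ∈ cs, ∃ s ∈ c.2.1, t = (c.1 :: s.1, s.2) :=
  Iff.rfl

theorem mem_xdetO2 {cs : List (A × XProc A X)} {p : List A × Set A} :
    p ∈ (xdetO cs).2 ↔ ∃ c ∈ cs, ∃ w, p.1 = c.1 :: w ∧ (w, p.2) ∈ c.2.2 :=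
  Iff.rfl

theorem xdet1_eq (cs : List (A × XProc A X)) : (xdet cs).1 = (xdetO cs).1 := rfl

theorem det_map_traces (f : XProc A X → XProc A Y) (cs : List (A × XProc A X)) :
    (xdet (cs.map fun c => (c.1, f c.2))).1 =
      {([], none)} ∪ {t | ∃ c ∈ cs, ∃ s ∈ (f c.2).1, t = (c.1 :: s.1, s.2)} := by
  ext t
  simp only [Set.mem_union, Set.mem_singleton_iff, Set.mem_setOf_eq]
  rw [mem_xdet1]
  constructor
  · rintro (h | ⟨c', hc', s, hs, rfl⟩)
    · exact Or.inl h
    · obtain ⟨c, hc, rfl⟩ := List.mem_map.1 hc'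
      exact Or.inr ⟨c, hc, s, hs, rfl⟩
  · rintro (h | ⟨c, hc, s, hs, rfl⟩)
    · exact Or.inl h
    · exact Or.inr ⟨_, List.mem_map_of_mem hc, s, hs, rfl⟩

theorem xdet_map_eq (f : XProc A X → XProc A Y) (cs : List (A × XProc A X)) :
    xdet (cs.map fun c => (c.1, f c.2)) =
      ({([], none)} ∪ {t | ∃ c ∈ cs, ∃ s ∈ (f c.2).1, t = (c.1 :: s.1, s.2)},
       {p | p.1 = [] ∧ ∀ c ∈ cs, c.1 ∉ p.2} ∪
       {p | ∃ c ∈ cs, ∃ w, p.1 = c.1 :: w ∧ (w, p.2) ∈ (f c.2).2}) := by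
  refine Prod.ext (det_map_traces f cs) ?_
  ext p
  simp only [Set.mem_union, Set.mem_setOf_eq]
  rw [mem_xdet2]
  constructor
  · rintro (⟨h1, h2⟩ | ⟨c', hc', w, hw, hf⟩)
    · exact Or.inl ⟨h1, fun c hc => h2 _ (List.mem_map_of_mem hc)⟩
    · obtain ⟨c, hc, rfl⟩ := List.mem_map.1 hc'
      exact Or.inr ⟨c, hc, w, hw, hf⟩
  · rintro (⟨h1, h2⟩ | ⟨c, hc, w, hw, hf⟩)
    · refine Or.inl ⟨h1, fun c' hc' => ?_⟩
      obtain ⟨c, hc, rfl⟩ := List.mem_map.1 hc'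
      exact h2 c hc
    · exact Or.inr ⟨_, List.mem_map_of_mem hc, w, hw, hf⟩

theorem xdetO_map_eq (f : XProc A X → XProc A Y) (cs : List (A × XProc A X)) :
    xdetO (cs.map fun c => (c.1, f c.2)) =
      ({([], none)} ∪ {t | ∃ c ∈ cs, ∃ s ∈ (f c.2).1, t = (c.1 :: s.1, s.2)},
       {p | ∃ c ∈ cs, ∃ w, p.1 = c.1 :: w ∧ (w, p.2) ∈ (f c.2).2}) := by
  refine Prod.ext (det_map_traces f cs) ?_
  ext p
  simp only [Set.mem_setOf_eq]
  rw [mem_xdetO2]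
  constructor
  · rintro ⟨c', hc', w, hw, hf⟩
    obtain ⟨c, hc, rfl⟩ := List.mem_map.1 hc'
    exact ⟨c, hc, w, hw, hf⟩
  · rintro ⟨c, hc, w, hw, hf⟩
    exact ⟨_, List.mem_map_of_mem hc, w, hw, hf⟩

theorem dagger_det_traces (g : X → XProc A Y) (cs : List (A × XProc A X)) :
    (dagger g (xdet cs)).1 =
      {([], none)} ∪ {t | ∃ c ∈ cs, ∃ s ∈ (dagger g c.2).1, t = (c.1 :: s.1, s.2)} := by
  ext ⟨w, o⟩
  rw [mem_dagger1]
  simp only [Set.mem_union, Set.mem_singleton_iff, Set.mem_setOf_eq]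
  constructor
  · rintro (⟨ho, h⟩ | ⟨v, x, hv, s, hs, ht⟩)
    · rcases mem_xdet1.1 h with h | ⟨c, hc, s, hs, heq⟩
      · left; rw [ho]; rw [Prod.mk.injEq] at h ⊢; exact ⟨h.1, rfl⟩
      · right
        rw [Prod.mk.injEq] at heq
        refine ⟨c, hc, (s.1, none), Or.inl ⟨rfl, ?_⟩, ?_⟩
        · have : s = (s.1, none) := by
            rw [Prod.ext_iff]; exact ⟨rfl, heq.2.symm⟩
          rwa [this] at hs
        · rw [Prod.mk.injEq]; exact ⟨heq.1, ho⟩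
    · rcases mem_xdet1.1 hv with h | ⟨c, hc, u, hu, heq⟩
      · simp at h
      · right
        rw [Prod.mk.injEq] at heq
        have hu' : (u.1, some x) ∈ c.2.1 := by
          have : u = (u.1, some x) := by rw [Prod.ext_iff]; exact ⟨rfl, heq.2.symm⟩
          rwa [this] at hu
        refine ⟨c, hc, (u.1 ++ s.1, s.2), Or.inr ⟨u.1, x, hu', s, hs, rfl⟩, ?_⟩
        rw [ht, heq.1]; simp
  · rintro (h | ⟨c, hc, s, hs, ht⟩)
    · rw [Prod.mk.injEq] at h; obtain ⟨rfl, rfl⟩ := h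
      exact Or.inl ⟨rfl, mem_xdet1.2 (Or.inl rfl)⟩
    · rcases hs with ⟨hs2, hmem⟩ | ⟨u, x, hu, s', hs', heq⟩
      · left
        rw [Prod.mk.injEq] at ht
        refine ⟨ht.2.trans hs2, ?_⟩
        rw [ht.1]
        exact mem_xdet1.2 (Or.inr ⟨c, hc, (s.1, none), hmem, rfl⟩)
      · right
        refine ⟨c.1 :: u, x, mem_xdet1.2 (Or.inr ⟨c, hc, (u, some x), hu, rfl⟩), s', hs', ?_⟩
        rw [ht, heq]; simp
  
theorem dagger_detO_traces (g : X → XProc A Y) (cs : List (A × XProc A X)) :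
    (dagger g (xdetO cs)).1 =
      {([], none)} ∪ {t | ∃ c ∈ cs, ∃ s ∈ (dagger g c.2).1, t = (c.1 :: s.1, s.2)} :=
  dagger_det_traces g cs

theorem dagger_detO_fails (g : X → XProc A Y) (cs : List (A × XProc A X)) :
    (dagger g (xdetO cs)).2 =
      {p | ∃ c ∈ cs, ∃ w, p.1 = c.1 :: w ∧ (w, p.2) ∈ (dagger g c.2).2} := by
  ext ⟨w, W⟩
  rw [mem_dagger2]
  simp only [Set.mem_setOf_eq]
  constructor
  · rintro (h | ⟨v, x, w', hv, hf, hp⟩)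
    · rcases mem_xdetO2.1 h with ⟨c, hc, u, hp, hf⟩
      exact ⟨c, hc, u, hp, Or.inl hf⟩
    · rcases mem_xdetO1.1 hv with h | ⟨c, hc, u, hu, heq⟩
      · simp at h
      · rw [Prod.mk.injEq] at heq
        have hu' : (u.1, some x) ∈ c.2.1 := by
          have : u = (u.1, some x) := by rw [Prod.ext_iff]; exact ⟨rfl, heq.2.symm⟩
          rwa [this] at hu
        refine ⟨c, hc, u.1 ++ w', ?_, Or.inr ⟨u.1, x, w', hu', hf, rfl⟩⟩
        rw [hp, heq.1]; simp
  · rintro ⟨c, hc, u, hp, hf | ⟨v, x, w', hv, hf, hu⟩⟩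
    · exact Or.inl (mem_xdetO2.2 ⟨c, hc, u, hp, hf⟩)
    · refine Or.inr ⟨c.1 :: v, x, w', mem_xdetO1.2 (Or.inr ⟨c, hc, (v, some x), hv, rfl⟩),
        hf, ?_⟩
      rw [hp]; exact congrArg (c.1 :: ·) hu

theorem dagger_det_fails (g : X → XProc A Y) (cs : List (A × XProc A X)) :
    (dagger g (xdet cs)).2 =
      {p | p.1 = [] ∧ ∀ c ∈ cs, c.1 ∉ p.2} ∪
      {p | ∃ c ∈ cs, ∃ w, p.1 = c.1 :: w ∧ (w, p.2) ∈ (dagger g c.2).2} := by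
  ext ⟨w, W⟩
  rw [mem_dagger2]
  simp only [Set.mem_union, Set.mem_setOf_eq]
  constructor
  · rintro (h | ⟨v, x, w', hv, hf, hp⟩)
    · rcases mem_xdet2.1 h with h | ⟨c, hc, u, hp, hf⟩
      · exact Or.inl h
      · exact Or.inr ⟨c, hc, u, hp, Or.inl hf⟩
    · rcases mem_xdet1.1 hv with h | ⟨c, hc, u, hu, heq⟩
      · simp at h
      · rw [Prod.mk.injEq] at heq
        have hu' : (u.1, some x) ∈ c.2.1 := by
          have : u = (u.1, some x) := by rw [Prod.ext_iff]; exact ⟨rfl, heq.2.symm⟩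
          rwa [this] at hu
        refine Or.inr ⟨c, hc, u.1 ++ w', ?_, Or.inr ⟨u.1, x, w', hu', hf, rfl⟩⟩
        rw [hp, heq.1]; simp
  · rintro (h | ⟨c, hc, u, hp, hf | ⟨v, x, w', hv, hf, hu⟩⟩)
    · exact Or.inl (mem_xdet2.2 (Or.inl h))
    · exact Or.inl (mem_xdet2.2 (Or.inr ⟨c, hc, u, hp, hf⟩))
    · refine Or.inr ⟨c.1 :: v, x, w', mem_xdet1.2 (Or.inr ⟨c, hc, (v, some x), hv, rfl⟩),
        hf, ?_⟩
      rw [hp]; exact congrArg (c.1 :: ·) hu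

theorem dagger_det' (g : X → XProc A Y) (cs : List (A × XProc A X)) :
    dagger g (xdet cs) = xdet (cs.map fun c => (c.1, dagger g c.2)) := by
  rw [xdet_map_eq]
  exact Prod.ext (dagger_det_traces g cs) (dagger_det_fails g cs)

theorem dagger_detO' (g : X → XProc A Y) (cs : List (A × XProc A X)) :
    dagger g (xdetO cs) = xdetO (cs.map fun c => (c.1, dagger g c.2)) := by
  rw [xdetO_map_eq]
  exact Prod.ext (dagger_detO_traces g cs) (dagger_detO_fails g cs)

theorem IsXProc.prefix_closed' {P : XProc A X} (hP : IsXProc P) :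
    ∀ (u v : List A), (u ++ v, (none : Option X)) ∈ P.1 → (u, (none : Option X)) ∈ P.1 := by
  intro u v
  induction v using List.reverseRecOn generalizing u with
  | nil => simpa using id
  | append_singleton v a ih =>
    intro h
    rw [← List.append_assoc] at h
    exact ih u (hP.prefix_closed _ _ h)

theorem concat_eq_append_cases {w v s : List A} {a : A} (h : w ++ [a] = v ++ s) :
    (s = [] ∧ w ++ [a] = v) ∨ ∃ u, s = u ++ [a] ∧ w = v ++ u := by
  rcases List.eq_nil_or_concat s with rfl | ⟨u, b, rfl⟩
  · exact Or.inl ⟨rfl, by simpa using h⟩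
  · simp only [List.concat_eq_append] at h ⊢
    rw [← List.append_assoc] at h
    obtain ⟨h1, h2⟩ := List.append_inj' h rfl
    obtain rfl : a = b := by simpa using h2
    exact Or.inr ⟨u, rfl, h1⟩

theorem dagger_isXProc (g : X → XProc A Y) (hg : ∀ x, IsXProc (g x))
    {P : XProc A X} (hP : IsXProc P) : IsXProc (dagger g P) := by
  constructor
  · exact Or.inl ⟨rfl, hP.nil_mem⟩
  · -- prefix_closed
    intro w a h
    rcases mem_dagger1.1 h with ⟨-, h⟩ | ⟨v, x, hv, s, hs, heq⟩
    · exact Or.inl ⟨rfl, hP.prefix_closed _ _ h⟩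
    · rw [Prod.mk.injEq] at heq
      obtain ⟨heq1, heq2⟩ := heq
      rcases concat_eq_append_cases heq1 with ⟨hs1, hv1⟩ | ⟨u, hs1, rfl⟩
      · -- s.1 = [], so w ++ [a] = v and (v, some x) ∈ P.1
        rw [← hv1] at hv
        exact Or.inl ⟨rfl, hP.prefix_closed _ _ (hP.xtrace_closed _ _ hv)⟩
      · -- s.1 = u ++ [a]
        have hs' : (u ++ [a], (none : Option Y)) ∈ (g x).1 := by
          have : s = (u ++ [a], none) := by
            rw [Prod.ext_iff]; exact ⟨hs1, heq2.symm⟩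
          rw [← this]; exact hs
        have : (u, (none : Option Y)) ∈ (g x).1 := (hg x).prefix_closed _ _ hs'
        exact Or.inr ⟨v, x, hv, (u, none), this, rfl⟩
  · -- xtrace_closed
    intro w y h
    rcases mem_dagger1.1 h with ⟨h0, -⟩ | ⟨v, x, hv, s, hs, heq⟩
    · simp at h0
    · rw [Prod.mk.injEq] at heq
      obtain ⟨rfl, heq2⟩ := heq
      have hs' : (s.1, some y) ∈ (g x).1 := by
        have : s = (s.1, some y) := by rw [Prod.ext_iff]; exact ⟨rfl, heq2.symm⟩
        rw [← this]; exact hs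
      exact Or.inr ⟨v, x, hv, (s.1, none), (hg x).xtrace_closed _ _ hs', rfl⟩
  · -- fail_trace
    intro w W h
    rcases mem_dagger2.1 h with h | ⟨v, x, w', hv, hf, hp⟩
    · exact Or.inl ⟨rfl, hP.fail_trace _ _ h⟩
    · exact Or.inr ⟨v, x, hv, (w', none), (hg x).fail_trace _ _ hf,
        by rw [Prod.mk.injEq]; exact ⟨hp, rfl⟩⟩
  · -- subset_closed
    intro w W V h hVW
    rcases mem_dagger2.1 h with h | ⟨v, x, w', hv, hf, hp⟩
    · exact Or.inl (hP.subset_closed _ _ _ h hVW)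
    · exact Or.inr ⟨v, x, w', hv, (hg x).subset_closed _ _ _ hf hVW, hp⟩
  · -- ext_closed
    intro w W V h hV
    rcases mem_dagger2.1 h with h | ⟨v, x, w', hv, hf, hp⟩
    · refine Or.inl (hP.ext_closed _ _ _ h fun a ha hmem => ?_)
      exact hV a ha (Or.inl ⟨rfl, hmem⟩)
    · refine Or.inr ⟨v, x, w', hv, (hg x).ext_closed _ _ _ hf fun a ha hmem => ?_, hp⟩
      have hp' : w = v ++ w' := hp
      refine hV a ha (Or.inr ⟨v, x, hv, (w' ++ [a], none), hmem, ?_⟩)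
      rw [Prod.mk.injEq, hp']
      exact ⟨List.append_assoc v w' [a], rfl⟩

theorem dagger_finitary (g : X → XProc A Y) {P : XProc A X} (hfin : XFinitary P)
    (hgfin : ∀ x : X, (∃ v : List A, (v, some x) ∈ P.1) → XFinitary (g x)) :
    XFinitary (dagger g P) := by
  have h1 : ({t : List A × Option Y | t.2 = none ∧ (t.1, (none : Option X)) ∈ P.1}).Finite := by
    have : {t : List A × Option Y | t.2 = none ∧ (t.1, (none : Option X)) ∈ P.1} ⊆
        (fun p : List A × Option X => (p.1, (none : Option Y))) '' P.1 := by
      rintro ⟨w, o⟩ ⟨ho, hw⟩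
      exact ⟨(w, none), hw, by simp [ho.symm]⟩
    exact Set.Finite.subset (hfin.image _) this
  have h2 : ({t : List A × Option Y | ∃ (v : List A) (x : X), (v, some x) ∈ P.1 ∧
      ∃ s ∈ (g x).1, t = (v ++ s.1, s.2)}).Finite := by
    have hidx : ({q : List A × X | (q.1, some q.2) ∈ P.1}).Finite := by
      have : {q : List A × X | (q.1, some q.2) ∈ P.1} ⊆
          (fun q : List A × X => (q.1, some q.2)) ⁻¹' P.1 := fun q hq => hq
      refine Set.Finite.subset (Set.Finite.preimage ?_ hfin) this
      intro q _ q' _ h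
      rw [Prod.mk.injEq] at h
      exact Prod.ext h.1 (Option.some_inj.1 h.2)
    have : {t : List A × Option Y | ∃ (v : List A) (x : X), (v, some x) ∈ P.1 ∧
        ∃ s ∈ (g x).1, t = (v ++ s.1, s.2)} ⊆
        ⋃ q ∈ {q : List A × X | (q.1, some q.2) ∈ P.1},
          (fun s : List A × Option Y => (q.1 ++ s.1, s.2)) '' (g q.2).1 := by
      rintro t ⟨v, x, hv, s, hs, rfl⟩
      exact Set.mem_biUnion (show (v, x) ∈ _ from hv) ⟨s, hs, rfl⟩
    refine Set.Finite.subset (Set.Finite.biUnion hidx fun q hq => ?_) this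
    exact Set.Finite.image _ (hgfin q.2 ⟨q.1, hq⟩)
  exact Set.Finite.union h1 h2

/-! ### Closure properties of the operations -/

theorem isXProc_xeta (x : X) : IsXProc (xeta A x) := by
  constructor
  · exact Or.inl rfl
  · rintro w a (h | h) <;> simp_all
  · rintro w x' (h | h) <;> simp_all [xeta]
  · rintro w W h; exact absurd h (Set.notMem_empty _)
  · rintro w W V h; exact absurd h (Set.notMem_empty _)
  · rintro w W V h; exact absurd h (Set.notMem_empty _)

theorem fin_xeta (x : X) : XFinitary (xeta A x) := (Set.finite_singleton _).insert _

theorem isXProc_xintc {P Q : XProc A X} (hP : IsXProc P) (hQ : IsXProc Q) :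
    IsXProc (xintc P Q) := by
  constructor
  · exact Or.inl hP.nil_mem
  · rintro w a (h | h)
    · exact Or.inl (hP.prefix_closed _ _ h)
    · exact Or.inr (hQ.prefix_closed _ _ h)
  · rintro w x (h | h)
    · exact Or.inl (hP.xtrace_closed _ _ h)
    · exact Or.inr (hQ.xtrace_closed _ _ h)
  · rintro w W (h | h)
    · exact Or.inl (hP.fail_trace _ _ h)
    · exact Or.inr (hQ.fail_trace _ _ h)
  · rintro w W V (h | h) hVW
    · exact Or.inl (hP.subset_closed _ _ _ h hVW)
    · exact Or.inr (hQ.subset_closed _ _ _ h hVW)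
  · rintro w W V (h | h) hV
    · exact Or.inl (hP.ext_closed _ _ _ h fun a ha hm => hV a ha (Or.inl hm))
    · exact Or.inr (hQ.ext_closed _ _ _ h fun a ha hm => hV a ha (Or.inr hm))

theorem fin_xintc {P Q : XProc A X} (hP : XFinitary P) (hQ : XFinitary Q) :
    XFinitary (xintc P Q) := Set.Finite.union hP hQ

theorem isXProc_xdetO {cs : List (A × XProc A X)} (hcs : ∀ c ∈ cs, IsXProc c.2) :
    IsXProc (xdetO cs) := by
  constructor
  · exact Or.inl rfl
  · intro w a h
    rcases mem_xdetO1.1 h with h | ⟨c, hc, s, hs, heq⟩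
    · simp at h
    · rw [Prod.mk.injEq] at heq
      obtain ⟨h1, h2⟩ := heq
      rcases List.eq_nil_or_concat s.1 with hnil | ⟨u, b, hcons⟩
      · rw [hnil] at h1
        obtain rfl : w = [] := by
          have := congrArg List.length h1
          simp at this
          simp [this]
        exact Or.inl rfl
      · rw [hcons, List.concat_eq_append, ← List.cons_append] at h1
        obtain ⟨h3, h4⟩ := List.append_inj' h1 rfl
        have hs' : (u ++ [b], (none : Option X)) ∈ c.2.1 := by
          have : s = (u ++ [b], none) := by
            rw [Prod.ext_iff]; exact ⟨by rw [hcons, List.concat_eq_append], h2.symm⟩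
          rw [← this]; exact hs
        refine Or.inr ⟨c, hc, (u, none), (hcs c hc).prefix_closed _ _ hs', ?_⟩
        rw [Prod.mk.injEq]; exact ⟨h3, rfl⟩
  · intro w x h
    rcases mem_xdetO1.1 h with h | ⟨c, hc, s, hs, heq⟩
    · simp at h
    · rw [Prod.mk.injEq] at heq
      obtain ⟨rfl, h2⟩ := heq
      have hs' : (s.1, some x) ∈ c.2.1 := by
        have : s = (s.1, some x) := by rw [Prod.ext_iff]; exact ⟨rfl, h2.symm⟩
        rw [← this]; exact hs
      exact Or.inr ⟨c, hc, (s.1, none), (hcs c hc).xtrace_closed _ _ hs', rfl⟩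
  · intro w W h
    rcases mem_xdetO2.1 h with ⟨c, hc, u, hw, hf⟩
    exact Or.inr ⟨c, hc, (u, none), (hcs c hc).fail_trace _ _ hf, by rw [Prod.mk.injEq]; exact ⟨hw, rfl⟩⟩
  · intro w W V h hVW
    rcases mem_xdetO2.1 h with ⟨c, hc, u, hw, hf⟩
    exact mem_xdetO2.2 ⟨c, hc, u, hw, (hcs c hc).subset_closed _ _ _ hf hVW⟩
  · intro w W V h hV
    rcases mem_xdetO2.1 h with ⟨c, hc, u, hw, hf⟩
    refine mem_xdetO2.2 ⟨c, hc, u, hw, (hcs c hc).ext_closed _ _ _ hf fun a ha hm => ?_⟩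
    have hw' : w = c.1 :: u := hw
    refine hV a ha (mem_xdetO1.2 (Or.inr ⟨c, hc, (u ++ [a], none), hm, ?_⟩))
    rw [Prod.mk.injEq, hw']
    exact ⟨rfl, rfl⟩

theorem isXProc_xdet {cs : List (A × XProc A X)} (hcs : ∀ c ∈ cs, IsXProc c.2) :
    IsXProc (xdet cs) := by
  have hO := isXProc_xdetO hcs
  constructor
  · exact hO.nil_mem
  · exact hO.prefix_closed
  · exact hO.xtrace_closed
  · intro w W h
    rcases mem_xdet2.1 h with ⟨h1, -⟩ | h
    · have h1' : w = [] := h1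
      rw [h1']; exact Or.inl rfl
    · exact hO.fail_trace w W (mem_xdetO2.2 h)
  · intro w W V h hVW
    rcases mem_xdet2.1 h with ⟨h1, h2⟩ | h
    · exact mem_xdet2.2 (Or.inl ⟨h1, fun c hc hm => h2 c hc (hVW hm)⟩)
    · rcases mem_xdetO2.1 (hO.subset_closed w W V (mem_xdetO2.2 h) hVW) with h'
      exact mem_xdet2.2 (Or.inr h')
  · intro w W V h hV
    rcases mem_xdet2.1 h with ⟨h1, h2⟩ | h
    · refine mem_xdet2.2 (Or.inl ⟨h1, fun c hc hm => ?_⟩)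
      rcases hm with hm | hm
      · exact h2 c hc hm
      · have h1' : w = [] := h1
        refine hV c.1 hm (mem_xdetO1.2 (Or.inr ⟨c, hc, ([], none), (hcs c hc).nil_mem, ?_⟩))
        rw [Prod.mk.injEq, h1']
        exact ⟨rfl, rfl⟩
    · rcases mem_xdetO2.1 (hO.ext_closed w W V (mem_xdetO2.2 h) hV) with h'
      exact mem_xdet2.2 (Or.inr h')

theorem fin_xdetO {cs : List (A × XProc A X)} (hcs : ∀ c ∈ cs, XFinitary c.2) :
    XFinitary (xdetO cs) := by
  refine Set.Finite.union (Set.finite_singleton _) ?_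
  have : {t : List A × Option X | ∃ c ∈ cs, ∃ s ∈ c.2.1, t = (c.1 :: s.1, s.2)} ⊆
      ⋃ c ∈ {c | c ∈ cs}, (fun s : List A × Option X => (c.1 :: s.1, s.2)) '' c.2.1 := by
    rintro t ⟨c, hc, s, hs, rfl⟩
    exact Set.mem_biUnion hc ⟨s, hs, rfl⟩
  exact Set.Finite.subset (Set.Finite.biUnion (List.finite_toSet cs)
    fun c hc => (hcs c hc).image _) this

theorem fin_xdet {cs : List (A × XProc A X)} (hcs : ∀ c ∈ cs, XFinitary c.2) :
    XFinitary (xdet cs) := fin_xdetO hcs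

/-! ### Derivatives -/

def deriv (P : XProc A X) (a : A) : XProc A X :=
  ({t | (a :: t.1, t.2) ∈ P.1}, {p | (a :: p.1, p.2) ∈ P.2})

theorem isXProc_deriv {P : XProc A X} (hP : IsXProc P) {a : A}
    (ha : ([a], (none : Option X)) ∈ P.1) : IsXProc (deriv P a) := by
  constructor
  · exact ha
  · intro w b h
    have : ((a :: w) ++ [b], (none : Option X)) ∈ P.1 := by exact h
    exact hP.prefix_closed _ _ this
  · exact fun w x h => hP.xtrace_closed _ _ h
  · exact fun w W h => hP.fail_trace _ _ h
  · exact fun w W V h hVW => hP.subset_closed _ _ _ h hVW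
  · intro w W V h hV
    refine hP.ext_closed _ _ _ h fun b hb hm => hV b hb ?_
    show (a :: (w ++ [b]), (none : Option X)) ∈ P.1
    simpa using hm

theorem fin_deriv {P : XProc A X} (hP : XFinitary P) (a : A) : XFinitary (deriv P a) := by
  have : (deriv P a).1 = (fun t : List A × Option X => (a :: t.1, t.2)) ⁻¹' P.1 := rfl
  rw [XFinitary, this]
  refine Set.Finite.preimage ?_ hP
  intro t _ t' _ h
  rw [Prod.mk.injEq, List.cons.injEq] at h
  exact Prod.ext h.1.2 h.2

theorem ncard_deriv_lt {P : XProc A X} (hP : IsXProc P) (hfin : XFinitary P) (a : A) :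
    (deriv P a).1.ncard < P.1.ncard := by
  have hinj : Set.InjOn (fun t : List A × Option X => (a :: t.1, t.2)) (deriv P a).1 := by
    intro t _ t' _ h
    rw [Prod.mk.injEq] at h
    obtain ⟨h1, h2⟩ := h
    rw [List.cons.injEq] at h1
    exact Prod.ext h1.2 h2
  have hsub : (fun t : List A × Option X => (a :: t.1, t.2)) '' (deriv P a).1 ⊆
      P.1 \ {([], none)} := by
    rintro t ⟨s, hs, rfl⟩
    exact ⟨hs, by simp⟩
  calc (deriv P a).1.ncard
      = ((fun t : List A × Option X => (a :: t.1, t.2)) '' (deriv P a).1).ncard :=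
        (Set.ncard_image_of_injOn hinj).symm
    _ ≤ (P.1 \ {([], none)}).ncard :=
        Set.ncard_le_ncard hsub ((hfin.subset Set.diff_subset))
    _ < P.1.ncard := Set.ncard_diff_singleton_lt_of_mem hP.nil_mem hfin

/-! ### Finite meets -/

def Meet1 (p : XProc A X) : List (XProc A X) → XProc A X
  | [] => p
  | q :: l => xintc p (Meet1 q l)

theorem mem_Meet1_1 {p : XProc A X} {l : List (XProc A X)} {t : List A × Option X} :
    t ∈ (Meet1 p l).1 ↔ t ∈ p.1 ∨ ∃ q ∈ l, t ∈ q.1 := by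
  induction l generalizing p with
  | nil => simp [Meet1]
  | cons q l ih =>
    simp only [Meet1, xintc, Set.mem_union, ih, List.mem_cons]
    constructor
    · rintro (h | h | ⟨r, hr, h⟩)
      · exact Or.inl h
      · exact Or.inr ⟨q, Or.inl rfl, h⟩
      · exact Or.inr ⟨r, Or.inr hr, h⟩
    · rintro (h | ⟨r, rfl | hr, h⟩)
      · exact Or.inl h
      · exact Or.inr (Or.inl h)
      · exact Or.inr (Or.inr ⟨r, hr, h⟩)

theorem mem_Meet1_2 {p : XProc A X} {l : List (XProc A X)} {q : List A × Set A} :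
    q ∈ (Meet1 p l).2 ↔ q ∈ p.2 ∨ ∃ r ∈ l, q ∈ r.2 := by
  induction l generalizing p with
  | nil => simp [Meet1]
  | cons r l ih =>
    simp only [Meet1, xintc, Set.mem_union, ih, List.mem_cons]
    constructor
    · rintro (h | h | ⟨r', hr, h⟩)
      · exact Or.inl h
      · exact Or.inr ⟨r, Or.inl rfl, h⟩
      · exact Or.inr ⟨r', Or.inr hr, h⟩
    · rintro (h | ⟨r', rfl | hr, h⟩)
      · exact Or.inl h
      · exact Or.inr (Or.inl h)
      · exact Or.inr (Or.inr ⟨r', hr, h⟩)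

theorem isXProc_Meet1 {p : XProc A X} {l : List (XProc A X)} (hp : IsXProc p)
    (hl : ∀ q ∈ l, IsXProc q) : IsXProc (Meet1 p l) := by
  induction l generalizing p with
  | nil => exact hp
  | cons q l ih =>
    exact isXProc_xintc hp (ih (hl q (List.mem_cons_self))
      fun r hr => hl r (List.mem_cons_of_mem q hr))

theorem fin_Meet1 {p : XProc A X} {l : List (XProc A X)} (hp : XFinitary p)
    (hl : ∀ q ∈ l, XFinitary q) : XFinitary (Meet1 p l) := by
  induction l generalizing p with
  | nil => exact hp
  | cons q l ih =>
    exact fin_xintc hp (ih (hl q (List.mem_cons_self))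
      fun r hr => hl r (List.mem_cons_of_mem q hr))

theorem dagger_Meet1 (g : X → XProc A Y) (p : XProc A X) (l : List (XProc A X)) :
    dagger g (Meet1 p l) = Meet1 (dagger g p) (l.map (dagger g)) := by
  induction l generalizing p with
  | nil => rfl
  | cons q l ih =>
    show dagger g (xintc p (Meet1 q l)) = xintc (dagger g p) (Meet1 (dagger g q) (l.map _))
    rw [dagger_intc' g p (Meet1 q l), ih]

theorem h_Meet1 {h : XProc A X → XProc A Y}
    (hh2 : ∀ P Q : XProc A X, IsXProc P → XFinitary P → IsXProc Q → XFinitary Q →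
      h (xintc P Q) = xintc (h P) (h Q)) :
    ∀ (l : List (XProc A X)) (p : XProc A X), IsXProc p → XFinitary p →
      (∀ q ∈ l, IsXProc q ∧ XFinitary q) → h (Meet1 p l) = Meet1 (h p) (l.map h) := by
  intro l
  induction l with
  | nil => intro p _ _ _; rfl
  | cons q l ih =>
    intro p hp hpf hl
    show h (xintc p (Meet1 q l)) = Meet1 (h p) ((q :: l).map h)
    rw [hh2 p (Meet1 q l) hp hpf
      (isXProc_Meet1 (hl q (List.mem_cons_self)).1
        fun r hr => (hl r (List.mem_cons_of_mem q hr)).1)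
      (fin_Meet1 (hl q (List.mem_cons_self)).2
        fun r hr => (hl r (List.mem_cons_of_mem q hr)).2),
      ih q (hl q (List.mem_cons_self)).1 (hl q (List.mem_cons_self)).2
        (fun r hr => hl r (List.mem_cons_of_mem q hr))]
    rfl

theorem decomp [DecidableEq A] {P : XProc A X} (hP : IsXProc P)
    (I : Finset A) (hI : ∀ a : A, a ∈ I ↔ (([a], none) : List A × Option X) ∈ P.1)
    (xs : Finset X) (hxs : ∀ x : X, x ∈ xs ↔ (([], some x) : List A × Option X) ∈ P.1)
    (Rs : Finset (Finset A))
    (hRs : ∀ R : Finset A, R ∈ Rs → R ⊆ I ∧ (([], (R : Set A)) : List A × Set A) ∈ P.2)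
    (hRex : ∀ W : Set A, (([], W) : List A × Set A) ∈ P.2 →
      ∃ R ∈ Rs, ∀ a ∈ I, a ∈ W → a ∈ R) :
    P = Meet1 (xdetO (I.toList.map fun a => (a, deriv P a)))
        ((Rs.toList.map fun R => xdet ((I \ R).toList.map fun a => (a, deriv P a))) ++
         xs.toList.map fun x => xeta A x) := by
  refine Prod.ext ?_ ?_
  · ext ⟨w, o⟩
    rw [mem_Meet1_1]
    constructor
    · intro hw
      rcases w with _ | ⟨a, u⟩
      · rcases o with _ | x
        · exact Or.inl (mem_xdetO1.2 (Or.inl rfl))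
        · refine Or.inr ⟨xeta A x, List.mem_append_right _
            (List.mem_map.2 ⟨x, Finset.mem_toList.2 ((hxs x).2 hw), rfl⟩), ?_⟩
          exact Or.inr rfl
      · have h0 : (a :: u, (none : Option X)) ∈ P.1 := by
          rcases o with _ | x
          · exact hw
          · exact hP.xtrace_closed _ _ hw
        have ha : a ∈ I := (hI a).2 (hP.prefix_closed' [a] u h0)
        exact Or.inl (mem_xdetO1.2 (Or.inr ⟨(a, deriv P a),
          List.mem_map.2 ⟨a, Finset.mem_toList.2 ha, rfl⟩, (u, o), hw, rfl⟩))
    · rintro (h | ⟨q, hq, h⟩)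
      · rcases mem_xdetO1.1 h with h | ⟨c, hc, s, hs, heq⟩
        · rw [Prod.mk.injEq] at h; obtain ⟨rfl, rfl⟩ := h; exact hP.nil_mem
        · obtain ⟨a, ha, rfl⟩ := List.mem_map.1 hc
          rw [Prod.mk.injEq] at heq; obtain ⟨rfl, rfl⟩ := heq
          exact hs
      · rcases List.mem_append.1 hq with hq | hq
        · obtain ⟨R, hR, rfl⟩ := List.mem_map.1 hq
          rcases mem_xdet1.1 h with h | ⟨c, hc, s, hs, heq⟩
          · rw [Prod.mk.injEq] at h; obtain ⟨rfl, rfl⟩ := h; exact hP.nil_mem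
          · obtain ⟨a, ha, rfl⟩ := List.mem_map.1 hc
            rw [Prod.mk.injEq] at heq; obtain ⟨rfl, rfl⟩ := heq
            exact hs
        · obtain ⟨x, hx, rfl⟩ := List.mem_map.1 hq
          rcases h with h | h
          · rw [Prod.mk.injEq] at h; obtain ⟨rfl, rfl⟩ := h; exact hP.nil_mem
          · rw [Set.mem_singleton_iff, Prod.mk.injEq] at h
            obtain ⟨rfl, rfl⟩ := h
            exact (hxs x).1 (Finset.mem_toList.1 hx)
  · ext ⟨w, W⟩
    rw [mem_Meet1_2]
    constructor
    · intro hw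
      rcases w with _ | ⟨a, u⟩
      · obtain ⟨R, hRmem, hRin⟩ := hRex W hw
        refine Or.inr ⟨xdet ((I \ R).toList.map fun a => (a, deriv P a)),
          List.mem_append_left _ (List.mem_map.2 ⟨R, Finset.mem_toList.2 hRmem, rfl⟩), ?_⟩
        refine mem_xdet2.2 (Or.inl ⟨rfl, ?_⟩)
        intro c hc hcw
        obtain ⟨a, ha, rfl⟩ := List.mem_map.1 hc
        rw [Finset.mem_toList, Finset.mem_sdiff] at ha
        exact ha.2 (hRin a ha.1 hcw)
      · have h0 : (a :: u, (none : Option X)) ∈ P.1 := hP.fail_trace _ _ hw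
        have ha : a ∈ I := (hI a).2 (hP.prefix_closed' [a] u h0)
        exact Or.inl (mem_xdetO2.2 ⟨(a, deriv P a),
          List.mem_map.2 ⟨a, Finset.mem_toList.2 ha, rfl⟩, u, rfl, hw⟩)
    · rintro (h | ⟨q, hq, h⟩)
      · rcases mem_xdetO2.1 h with ⟨c, hc, u, hwu, hf⟩
        obtain ⟨a, ha, rfl⟩ := List.mem_map.1 hc
        have hwu' : w = a :: u := hwu
        rw [hwu']
        exact hf
      · rcases List.mem_append.1 hq with hq | hq
        · obtain ⟨R, hR, rfl⟩ := List.mem_map.1 hq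
          rcases mem_xdet2.1 h with ⟨h1, h2⟩ | ⟨c, hc, u, hwu, hf⟩
          · have hw0 : w = [] := h1
            subst hw0
            obtain ⟨hRI, hRF⟩ := hRs R (Finset.mem_toList.1 hR)
            have hext : (([], ((R : Set A) ∪
                (W \ {a | (([a], none) : List A × Option X) ∈ P.1}))) : List A × Set A) ∈ P.2 := by
              refine hP.ext_closed _ _ _ hRF ?_
              rintro a ⟨haW, hanot⟩ hmem
              exact hanot hmem
            refine hP.subset_closed _ _ _ hext ?_
            intro a haW
            by_cases haI : (([a], none) : List A × Option X) ∈ P.1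
            · left
              by_contra haR
              have hmemsd : a ∈ I \ R := Finset.mem_sdiff.2 ⟨(hI a).2 haI,
                fun h' => haR (Finset.mem_coe.2 h')⟩
              exact h2 (a, deriv P a)
                (List.mem_map.2 ⟨a, Finset.mem_toList.2 hmemsd, rfl⟩) haW
            · exact Or.inr ⟨haW, haI⟩
          · obtain ⟨a, ha, rfl⟩ := List.mem_map.1 hc
            have hwu' : w = a :: u := hwu
            rw [hwu']
            exact hf
        · obtain ⟨x, hx, rfl⟩ := List.mem_map.1 hq
          exact absurd h (Set.notMem_empty _)

theorem final_chain (g : X → XProc A Y) {h : XProc A X → XProc A Y}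
    (hh2 : ∀ P Q : XProc A X, IsXProc P → XFinitary P → IsXProc Q → XFinitary Q →
      h (xintc P Q) = xintc (h P) (h Q))
    {P hd : XProc A X} {L : List (XProc A X)}
    (hdecomp : P = Meet1 hd L) (hhd1 : IsXProc hd) (hhd2 : XFinitary hd)
    (hhd_eq : h hd = dagger g hd)
    (hL : ∀ q ∈ L, (IsXProc q ∧ XFinitary q) ∧ h q = dagger g q) :
    h P = dagger g P :=
  calc h P = h (Meet1 hd L) := congrArg h hdecomp
    _ = Meet1 (h hd) (L.map h) :=
        h_Meet1 hh2 L hd hhd1 hhd2 (fun q hq => (hL q hq).1)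
    _ = Meet1 (dagger g hd) (L.map (dagger g)) := by
        rw [hhd_eq, List.map_congr_left fun q hq => (hL q hq).2]
    _ = dagger g (Meet1 hd L) := (dagger_Meet1 g hd L).symm
    _ = dagger g P := (congrArg (dagger g) hdecomp).symm

theorem uniq (g : X → XProc A Y) (hg : ∀ x, IsXProc (g x))
    (h : XProc A X → XProc A Y)
    (hh1 : ∀ x : X, h (xeta A x) = g x)
    (hh2 : ∀ P Q : XProc A X, IsXProc P → XFinitary P → IsXProc Q → XFinitary Q →
      h (xintc P Q) = xintc (h P) (h Q))
    (hh3 : ∀ cs : List (A × XProc A X), (cs.map Prod.fst).Nodup →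
      (∀ c ∈ cs, IsXProc c.2 ∧ XFinitary c.2) →
      h (xdet cs) = xdet (cs.map (fun c => (c.1, h c.2))) ∧
      h (xdetO cs) = xdetO (cs.map (fun c => (c.1, h c.2)))) :
    ∀ (n : ℕ) (P : XProc A X), IsXProc P → XFinitary P → P.1.ncard ≤ n →
      h P = dagger g P := by
  intro n
  induction n with
  | zero =>
    intro P hP hfin hle
    have : 0 < P.1.ncard := (Set.ncard_pos hfin).2 ⟨_, hP.nil_mem⟩
    omega
  | succ n ih =>
    intro P hP hfin hle
    classical
    have hIfin : ((fun a : A => (([a], none) : List A × Option X)) ⁻¹' P.1).Finite :=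
      Set.Finite.preimage (fun a _ b _ hab => by simpa using hab) hfin
    have hXfin : ((fun x : X => (([], some x) : List A × Option X)) ⁻¹' P.1).Finite :=
      Set.Finite.preimage (fun a _ b _ hab => by simpa using hab) hfin
    have hI : ∀ a : A, a ∈ hIfin.toFinset ↔ (([a], none) : List A × Option X) ∈ P.1 :=
      fun a => by simp [Set.Finite.mem_toFinset]
    have hxs : ∀ x : X, x ∈ hXfin.toFinset ↔ (([], some x) : List A × Option X) ∈ P.1 :=
      fun x => by simp [Set.Finite.mem_toFinset]
    have hRs : ∀ R ∈ hIfin.toFinset.powerset.filter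
        (fun R : Finset A => (([], (R : Set A)) : List A × Set A) ∈ P.2),
        R ⊆ hIfin.toFinset ∧ (([], (R : Set A)) : List A × Set A) ∈ P.2 := fun R hR => by
      rw [Finset.mem_filter, Finset.mem_powerset] at hR; exact hR
    have hRex : ∀ W : Set A, (([], W) : List A × Set A) ∈ P.2 →
        ∃ R ∈ hIfin.toFinset.powerset.filter
          (fun R : Finset A => (([], (R : Set A)) : List A × Set A) ∈ P.2),
          ∀ a ∈ hIfin.toFinset, a ∈ W → a ∈ R := by
      intro W hW
      refine ⟨hIfin.toFinset.filter (fun a => a ∈ W), ?_,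
        fun a haI haW => Finset.mem_filter.2 ⟨haI, haW⟩⟩
      rw [Finset.mem_filter, Finset.mem_powerset]
      refine ⟨Finset.filter_subset _ _, hP.subset_closed _ _ _ hW ?_⟩
      intro a ha
      exact (Finset.mem_filter.1 (Finset.mem_coe.1 ha)).2
    have key : ∀ l : List A, (∀ a ∈ l, a ∈ hIfin.toFinset) → l.Nodup →
        (∀ c ∈ l.map (fun a => (a, deriv P a)), IsXProc c.2 ∧ XFinitary c.2) ∧
        h (xdet (l.map fun a => (a, deriv P a))) =
          dagger g (xdet (l.map fun a => (a, deriv P a))) ∧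
        h (xdetO (l.map fun a => (a, deriv P a))) =
          dagger g (xdetO (l.map fun a => (a, deriv P a))) := by
      intro l hmem hnd
      have hprops : ∀ c ∈ l.map (fun a => (a, deriv P a)), IsXProc c.2 ∧ XFinitary c.2 := by
        intro c hc
        obtain ⟨a, ha, rfl⟩ := List.mem_map.1 hc
        exact ⟨isXProc_deriv hP ((hI a).1 (hmem a ha)), fin_deriv hfin a⟩
      have hnodup : ((l.map fun a => (a, deriv P a)).map Prod.fst).Nodup := by
        rw [List.map_map]
        have hcomp : (Prod.fst ∘ fun a : A => (a, deriv P a)) = id := rfl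
        rw [hcomp, List.map_id]
        exact hnd
      obtain ⟨hdet, hdetO⟩ := hh3 _ hnodup hprops
      have hmapeq : ((l.map fun a => (a, deriv P a)).map fun c => (c.1, h c.2)) =
          ((l.map fun a => (a, deriv P a)).map fun c => (c.1, dagger g c.2)) := by
        refine List.map_congr_left fun c hc => ?_
        obtain ⟨a, ha, rfl⟩ := List.mem_map.1 hc
        rw [ih (deriv P a) (isXProc_deriv hP ((hI a).1 (hmem a ha))) (fin_deriv hfin a)
          (Nat.lt_succ_iff.1 (lt_of_lt_of_le (ncard_deriv_lt hP hfin a) hle))]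
      refine ⟨hprops, ?_, ?_⟩
      · rw [hdet, hmapeq, ← dagger_det']
      · rw [hdetO, hmapeq, ← dagger_detO']
    have hdecomp := decomp hP hIfin.toFinset hI hXfin.toFinset hxs _ hRs hRex
    have hkeyI := key hIfin.toFinset.toList (fun a ha => Finset.mem_toList.1 ha)
      (Finset.nodup_toList _)
    refine final_chain g hh2 hdecomp
      (isXProc_xdetO fun c hc => (hkeyI.1 c hc).1)
      (fin_xdetO fun c hc => (hkeyI.1 c hc).2)
      hkeyI.2.2 ?_
    intro q hq
    rcases List.mem_append.1 hq with hq | hq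
    · obtain ⟨R, hR, rfl⟩ := List.mem_map.1 hq
      have hkeyR := key (hIfin.toFinset \ R).toList
        (fun a ha => (Finset.mem_sdiff.1 (Finset.mem_toList.1 ha)).1)
        (Finset.nodup_toList _)
      exact ⟨⟨isXProc_xdet fun c hc => (hkeyR.1 c hc).1,
        fin_xdet fun c hc => (hkeyR.1 c hc).2⟩, hkeyR.2.1⟩
    · obtain ⟨x, hx, rfl⟩ := List.mem_map.1 hq
      exact ⟨⟨isXProc_xeta x, fin_xeta x⟩, (hh1 x).trans (dagger_eta' g hg x).symm⟩

end Aux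

/-- `g†` is well defined on (finitary) `X`-processes, extends
`g` along `η`, is a homomorphism for `⊓`, `□_{a⃗}` and `□^Ω_{a⃗}`, and is the
unique such map on finitary `X`-processes. -/
theorem dagger_characterisation {A X Y : Type*}
    (g : X → XProc A Y) (hg : ∀ x, IsXProc (g x)) :
    (∀ P : XProc A X, IsXProc P →
        IsXProc (dagger g P) ∧
        (XFinitary P → (∀ x : X, (∃ v : List A, (v, some x) ∈ P.1) →
            XFinitary (g x)) → XFinitary (dagger g P))) ∧
    (∀ x : X, dagger g (xeta A x) = g x) ∧
    (∀ P Q : XProc A X, IsXProc P → IsXProc Q →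
        dagger g (xintc P Q) = xintc (dagger g P) (dagger g Q)) ∧
    (∀ cs : List (A × XProc A X), (cs.map Prod.fst).Nodup →
        (∀ c ∈ cs, IsXProc c.2) →
        dagger g (xdet cs) = xdet (cs.map (fun c => (c.1, dagger g c.2))) ∧
        dagger g (xdetO cs) = xdetO (cs.map (fun c => (c.1, dagger g c.2)))) ∧
    (∀ h : XProc A X → XProc A Y,
        (∀ x : X, h (xeta A x) = g x) →
        (∀ P Q : XProc A X, IsXProc P → XFinitary P → IsXProc Q → XFinitary Q →
            h (xintc P Q) = xintc (h P) (h Q)) →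
        (∀ cs : List (A × XProc A X), (cs.map Prod.fst).Nodup →
            (∀ c ∈ cs, IsXProc c.2 ∧ XFinitary c.2) →
            h (xdet cs) = xdet (cs.map (fun c => (c.1, h c.2))) ∧
            h (xdetO cs) = xdetO (cs.map (fun c => (c.1, h c.2)))) →
        ∀ P : XProc A X, IsXProc P → XFinitary P → h P = dagger g P) := by
  refine ⟨?_, ?_, ?_, ?_, ?_⟩
  · exact fun P hP => ⟨dagger_isXProc g hg hP, fun hf hgf => dagger_finitary g hf hgf⟩
  · exact dagger_eta' g hg
  · exact fun P Q _ _ => dagger_intc' g P Q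
  · exact fun cs _ _ => ⟨dagger_det' g cs, dagger_detO' g cs⟩
  · intro h hh1 hh2 hh3 P hP hfin
    exact uniq g hg h hh1 hh2 hh3 P.1.ncard P hP hfin le_rfl

end CSP
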